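/- For all a, b ∈ ℝ⁴, the map x ↦ x/⟨x⟩ satisfies the quantitative monotonicity lower bound ‖a/⟨a⟩ − b/⟨b⟩‖ ≥ ‖a − b‖ / max(⟨a⟩, ⟨b⟩)³. In particular, taking a = η and b = ξ+η, for signs κ₁ = κ₂ the gradient ∇_η q_K(ξ, η) = κ₁(η/⟨η⟩ − (ξ+η)/⟨ξ+η⟩) satisfies ‖∇_η q_K(ξ, η)‖ ≥ |ξ| / max(⟨η⟩, ⟨ξ+η⟩)³. -/

import Mathlib

/-- Japanese bracket `⟨x⟩ = √(1 + |x|²)` on `ℝ⁴`. -/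
noncomputable def jb (x : EuclideanSpace ℝ (Fin 4)) : ℝ := Real.sqrt (1 + ‖x‖ ^ 2)

lemma jb_sq (x : EuclideanSpace ℝ (Fin 4)) : (jb x) ^ 2 = 1 + ‖x‖ ^ 2 :=
  Real.sq_sqrt (by positivity)

lemma jb_ge_one (x : EuclideanSpace ℝ (Fin 4)) : 1 ≤ jb x := by
  have h1 := jb_sq x
  have h2 : 0 ≤ jb x := Real.sqrt_nonneg _
  nlinarith [sq_nonneg ‖x‖]

lemma jb_pos (x : EuclideanSpace ℝ (Fin 4)) : 0 < jb x :=
  lt_of_lt_of_le one_pos (jb_ge_one x)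

lemma jb_mono {a b : EuclideanSpace ℝ (Fin 4)} (h : ‖a‖ ≤ ‖b‖) : jb a ≤ jb b :=
  Real.sqrt_le_sqrt (by nlinarith [norm_nonneg a, norm_nonneg b])

/-- Pure scalar inequality at the heart of the bound. -/
lemma scalar_key (u v A B t : ℝ) (hu : 0 ≤ u) (hv : 0 ≤ v) (huv : u ≤ v)
    (hA1 : 1 ≤ A) (hB1 : 1 ≤ B)
    (hB2 : B ^ 2 = 1 + v ^ 2)
    (hAB : 1 + u * v ≤ A * B) (ht : t ≤ u * v) :
    u ^ 2 - 2 * t + v ^ 2 ≤ B ^ 2 * (B ^ 2 * u ^ 2 - 2 * (A * B) * t + A ^ 2 * v ^ 2) := by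
  have hA0 : (0:ℝ) < A := lt_of_lt_of_le one_pos hA1
  have hB0 : (0:ℝ) < B := lt_of_lt_of_le one_pos hB1
  -- step 1 : A*B*v - B^2*u ≥ v - u ≥ 0
  have step1 : v - u ≤ A * B * v - B ^ 2 * u := by
    have := mul_le_mul_of_nonneg_right hAB hv
    nlinarith
  -- step 2 : (u - v)^2 ≤ (B^2*u - A*B*v)^2
  have step2 : (u - v) ^ 2 ≤ (B ^ 2 * u - A * B * v) ^ 2 := by
    have h1 : u - v ≤ A * B * v - B ^ 2 * u := by linarith
    have h2 : -(A * B * v - B ^ 2 * u) ≤ u - v := by linarith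
    calc (u - v) ^ 2 ≤ (A * B * v - B ^ 2 * u) ^ 2 := sq_le_sq' h2 h1
    _ = (B ^ 2 * u - A * B * v) ^ 2 := by ring
  have hB2' : 1 ≤ B ^ 2 := by nlinarith
  have hB3 : 1 ≤ B ^ 3 := by
    nlinarith [mul_le_mul hB1 hB2' (by norm_num : (0:ℝ) ≤ 1) (le_of_lt hB0)]
  have hAB3 : 1 ≤ A * B ^ 3 := by
    nlinarith [mul_le_mul hA1 hB3 (by norm_num : (0:ℝ) ≤ 1) (le_of_lt hA0)]
  have hmul : t * (A * B ^ 3 - 1) ≤ u * v * (A * B ^ 3 - 1) :=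
    mul_le_mul_of_nonneg_right ht (by linarith)
  nlinarith [step2, hmul]

lemma jb_key (a b : EuclideanSpace ℝ (Fin 4)) (h : ‖a‖ ≤ ‖b‖) :
    ‖a - b‖ / (jb b) ^ 3 ≤ ‖(jb a)⁻¹ • a - (jb b)⁻¹ • b‖ := by
  have hA1 : 1 ≤ jb a := jb_ge_one a
  have hB1 : 1 ≤ jb b := jb_ge_one b
  have hA0 : 0 < jb a := jb_pos a
  have hB0 : 0 < jb b := jb_pos b
  have hA2 : (jb a) ^ 2 = 1 + ‖a‖ ^ 2 := jb_sq a
  have hB2 : (jb b) ^ 2 = 1 + ‖b‖ ^ 2 := jb_sq b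
  have hu : 0 ≤ ‖a‖ := norm_nonneg a
  have hv : 0 ≤ ‖b‖ := norm_nonneg b
  have hAleB : jb a ≤ jb b := jb_mono h
  have hAB : 1 + ‖a‖ * ‖b‖ ≤ jb a * jb b := by
    have h1 : jb a * jb b = Real.sqrt ((1 + ‖a‖ ^ 2) * (1 + ‖b‖ ^ 2)) := by
      rw [jb, jb, ← Real.sqrt_mul (by positivity)]
    rw [h1, show (1 + ‖a‖ * ‖b‖) = Real.sqrt ((1 + ‖a‖ * ‖b‖) ^ 2) from
      (Real.sqrt_sq (by positivity)).symm]
    exact Real.sqrt_le_sqrt (by nlinarith [sq_nonneg (‖a‖ - ‖b‖)])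
  have ht : inner ℝ a b ≤ ‖a‖ * ‖b‖ := real_inner_le_norm a b
  have hD2 : ‖a - b‖ ^ 2 = ‖a‖ ^ 2 - 2 * inner ℝ a b + ‖b‖ ^ 2 :=
    norm_sub_sq_real a b
  have hW2 : ‖(jb b) • a - (jb a) • b‖ ^ 2
      = (jb b) ^ 2 * ‖a‖ ^ 2 - 2 * (jb a * jb b) * inner ℝ a b
        + (jb a) ^ 2 * ‖b‖ ^ 2 := by
    rw [norm_sub_sq_real, norm_smul, norm_smul, real_inner_smul_left,
      real_inner_smul_right, Real.norm_eq_abs, Real.norm_eq_abs,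
      abs_of_pos hA0, abs_of_pos hB0]
    ring
  have hsq : ‖a - b‖ ^ 2 ≤ (jb b) ^ 2 * ‖(jb b) • a - (jb a) • b‖ ^ 2 := by
    rw [hD2, hW2]
    exact scalar_key ‖a‖ ‖b‖ (jb a) (jb b) _ hu hv h hA1 hB1 hB2 hAB ht
  have hW0 : 0 ≤ ‖(jb b) • a - (jb a) • b‖ := norm_nonneg _
  have hDBW : ‖a - b‖ ≤ jb b * ‖(jb b) • a - (jb a) • b‖ := by
    rw [show ‖a - b‖ = Real.sqrt (‖a - b‖ ^ 2) from (Real.sqrt_sq (norm_nonneg _)).symm,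
      show jb b * ‖(jb b) • a - (jb a) • b‖
        = Real.sqrt ((jb b * ‖(jb b) • a - (jb a) • b‖) ^ 2) from
        (Real.sqrt_sq (by positivity)).symm]
    exact Real.sqrt_le_sqrt (by nlinarith [hsq])
  have hrw : (jb a)⁻¹ • a - (jb b)⁻¹ • b = (jb a * jb b)⁻¹ • ((jb b) • a - (jb a) • b) := by
    have e1 : (jb a * jb b)⁻¹ * jb b = (jb a)⁻¹ := by field_simp
    have e2 : (jb a * jb b)⁻¹ * jb a = (jb b)⁻¹ := by field_simp
    rw [smul_sub, smul_smul, smul_smul, e1, e2]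
  rw [hrw, norm_smul, Real.norm_eq_abs,
    abs_of_pos (by positivity : (0:ℝ) < (jb a * jb b)⁻¹)]
  rw [inv_mul_eq_div, div_le_div_iff₀ (by positivity) (by positivity)]
  nlinarith [mul_le_mul_of_nonneg_right hDBW (le_of_lt (mul_pos hA0 hB0)),
    mul_nonneg hW0 (le_of_lt hB0),
    mul_nonneg (mul_nonneg hW0 (le_of_lt hB0)) (le_of_lt hB0)]

/-- For all `a, b ∈ ℝ⁴`, the map `x ↦ x/⟨x⟩` satisfies the quantitative monotonicity
lower bound `‖a/⟨a⟩ − b/⟨b⟩‖ ≥ ‖a − b‖ / max(⟨a⟩, ⟨b⟩)³`. In particular, taking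
`a = η`, `b = ξ+η`, for signs `κ₁ = κ₂` the gradient
`∇_η q_K(ξ, η) = κ₁(η/⟨η⟩ − (ξ+η)/⟨ξ+η⟩)` satisfies
`‖∇_η q_K(ξ, η)‖ ≥ |ξ| / max(⟨η⟩, ⟨ξ+η⟩)³`. -/
theorem jb_normalization_lower_bound :
    (∀ a b : EuclideanSpace ℝ (Fin 4),
      ‖a - b‖ / (max (jb a) (jb b)) ^ 3 ≤ ‖(jb a)⁻¹ • a - (jb b)⁻¹ • b‖) ∧
    (∀ κ₁ κ₂ : ℝ, (κ₁ = -1 ∨ κ₁ = 1) → (κ₂ = -1 ∨ κ₂ = 1) → κ₁ = κ₂ →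
      ∀ ξ η : EuclideanSpace ℝ (Fin 4),
        ‖ξ‖ / (max (jb η) (jb (ξ + η))) ^ 3
          ≤ ‖κ₁ • ((jb η)⁻¹ • η - (jb (ξ + η))⁻¹ • (ξ + η))‖) := by
  have part1 : ∀ a b : EuclideanSpace ℝ (Fin 4),
      ‖a - b‖ / (max (jb a) (jb b)) ^ 3 ≤ ‖(jb a)⁻¹ • a - (jb b)⁻¹ • b‖ := by
    intro a b
    rcases le_total ‖a‖ ‖b‖ with h | h
    · rw [max_eq_right (jb_mono h)]
      exact jb_key a b h
    · rw [max_eq_left (jb_mono h), norm_sub_rev]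
      calc ‖b - a‖ / jb a ^ 3 ≤ ‖(jb b)⁻¹ • b - (jb a)⁻¹ • a‖ := jb_key b a h
      _ = ‖(jb a)⁻¹ • a - (jb b)⁻¹ • b‖ := norm_sub_rev _ _
  refine ⟨part1, ?_⟩
  intro κ₁ κ₂ hκ₁ _ _ ξ η
  have habs : |κ₁| = 1 := by rcases hκ₁ with h | h <;> rw [h] <;> simp
  rw [norm_smul, Real.norm_eq_abs, habs, one_mul]
  have hmain := part1 η (ξ + η)
  have heq : ‖η - (ξ + η)‖ = ‖ξ‖ := by
    rw [show η - (ξ + η) = -ξ by abel, norm_neg]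
  rwa [heq] at hmain
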